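/- arXiv:1905.00113 — 2 statements merged into one kernel-verified Lean document; each statement's English description precedes it below -/
import Mathlib

section
/- Let Φ be a frame for H with lower bound m_Φ, and suppose the sequence Ψ satisfies Σₙ ‖φₙ − ψₙ‖² =: q < ∞ and q₀ := Σₙ ‖φₙ − ψₙ‖ · ‖S_Φ⁻¹ φₙ‖ < 1. Then Ψ is a frame for H with lower bound m_Φ(1 − q₀)² and upper bound M_Φ(1 + √(q/M_Φ))². -/
open ContinuousLinearMap MeasureTheory
open scoped InnerProductSpace ComplexConjugate

noncomputable section

notation "ℓ²" => lp (fun _ : ℕ => ℂ) 2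

variable {H : Type} [NormedAddCommGroup H] [InnerProductSpace ℂ H] [CompleteSpace H]

/-- `Φ = (φₙ)` is a frame for `H` with lower bound `m` and upper bound `M`. -/
def IsFrame (φ : ℕ → H) (m M : ℝ) : Prop :=
  0 < m ∧ 0 < M ∧ ∀ f : H,
    m * ‖f‖ ^ 2 ≤ ∑' n, ‖(inner ℂ (φ n) f : ℂ)‖ ^ 2 ∧
    ∑' n, ‖(inner ℂ (φ n) f : ℂ)‖ ^ 2 ≤ M * ‖f‖ ^ 2

/-- `Φ = (φₙ)` is a Bessel sequence with bound `M`. -/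
def IsBessel (φ : ℕ → H) (M : ℝ) : Prop :=
  0 < M ∧ ∀ f : H, ∑' n, ‖(inner ℂ (φ n) f : ℂ)‖ ^ 2 ≤ M * ‖f‖ ^ 2

/-- `U` is the analysis operator of the sequence `Φ = (φₙ)`, i.e. `U f = (⟨f, φₙ⟩)ₙ`. -/
def IsAnalysis (φ : ℕ → H) (U : H →L[ℂ] ℓ²) : Prop :=
  ∀ (f : H) (n : ℕ), U f n = (inner ℂ (φ n) f : ℂ)

/-- Orthogonal projection onto a closed submodule, as an endomorphism. -/
def orthProj {E : Type} [NormedAddCommGroup E] [InnerProductSpace ℂ E] [CompleteSpace E]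
    (K : Submodule ℂ E) (hK : IsClosed (K : Set E)) : E →L[ℂ] E :=
  haveI := hK.completeSpace_coe
  K.subtypeL.comp K.orthogonalProjection

/-- Orthogonal projection onto a closed submodule, with values in the submodule. -/
def orthProjTo {E : Type} [NormedAddCommGroup E] [InnerProductSpace ℂ E] [CompleteSpace E]
    (K : Submodule ℂ E) (hK : IsClosed (K : Set E)) : E →L[ℂ] K :=
  haveI := hK.completeSpace_coe
  K.orthogonalProjection

/-- The gap `δ(X, Y) = ‖(Id - P_Y)|_X‖` from `X` to a closed subspace `Y`. -/
def gap {E : Type} [NormedAddCommGroup E] [InnerProductSpace ℂ E] [CompleteSpace E]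
    (X Y : Submodule ℂ E) (hY : IsClosed (Y : Set E)) : ℝ :=
  ‖(ContinuousLinearMap.id ℂ E - orthProj Y hY).comp X.subtypeL‖

/-! ### Auxiliary lemmas -/

lemma summable_mul_of_sq {u v : ℕ → ℝ} (hu0 : ∀ n, 0 ≤ u n) (hv0 : ∀ n, 0 ≤ v n)
    (hu : Summable fun n => u n ^ 2) (hv : Summable fun n => v n ^ 2) :
    Summable fun n => u n * v n := by
  refine Summable.of_nonneg_of_le (fun n => mul_nonneg (hu0 n) (hv0 n))
    (fun n => ?_) ((hu.add hv).mul_left (1/2))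
  nlinarith [sq_nonneg (u n - v n)]

lemma memℓp2_real {u : ℕ → ℝ} (hu : Summable fun n => u n ^ 2) :
    Memℓp u (2 : ENNReal) := by
  apply memℓp_gen
  have h2 : ((2:ENNReal)).toReal = ((2:ℕ):ℝ) := by simp
  rw [h2]
  refine hu.congr fun n => ?_
  rw [Real.rpow_natCast]
  simp [sq_abs]

lemma lp_norm_sq_real (u : lp (fun _ : ℕ => ℝ) 2) : ‖u‖ ^ 2 = ∑' n, (u n) ^ 2 := by
  have hp : 0 < ((2:ENNReal)).toReal := by simp
  have := lp.norm_rpow_eq_tsum hp u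
  have h2 : ((2:ENNReal)).toReal = ((2:ℕ):ℝ) := by simp
  rw [h2] at this
  simp only [Real.rpow_natCast] at this
  simpa [sq_abs] using this

lemma lp_norm_sq_c (u : ℓ²) : ‖u‖ ^ 2 = ∑' n, ‖u n‖ ^ 2 := by
  have hp : 0 < ((2:ENNReal)).toReal := by simp
  have := lp.norm_rpow_eq_tsum hp u
  have h2 : ((2:ENNReal)).toReal = ((2:ℕ):ℝ) := by simp
  rw [h2] at this
  simp only [Real.rpow_natCast] at this
  simpa using this

lemma lp_summable_sq_c (u : ℓ²) : Summable fun n => ‖u n‖ ^ 2 := by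
  have hp : 0 < ((2:ENNReal)).toReal := by simp
  have := (lp.memℓp u).summable hp
  have h2 : ((2:ENNReal)).toReal = ((2:ℕ):ℝ) := by simp
  rw [h2] at this
  simpa [Real.rpow_natCast] using this

lemma tsum_cauchy_schwarz {u v : ℕ → ℝ} (_ : ∀ n, 0 ≤ u n) (_ : ∀ n, 0 ≤ v n)
    (hu : Summable fun n => u n ^ 2) (hv : Summable fun n => v n ^ 2) :
    ∑' n, u n * v n ≤ Real.sqrt (∑' n, u n ^ 2) * Real.sqrt (∑' n, v n ^ 2) := by
  set x : lp (fun _ : ℕ => ℝ) 2 := ⟨u, memℓp2_real hu⟩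
  set y : lp (fun _ : ℕ => ℝ) 2 := ⟨v, memℓp2_real hv⟩
  have h1 : (⟪x, y⟫_ℝ : ℝ) = ∑' n, u n * v n := by
    rw [lp.inner_eq_tsum]; exact tsum_congr fun n => by simp [x, y, RCLike.inner_apply, mul_comm]
  have h2 : ‖x‖ = Real.sqrt (∑' n, u n ^ 2) := by
    rw [← lp_norm_sq_real x]; exact (Real.sqrt_sq (norm_nonneg x)).symm
  have h3 : ‖y‖ = Real.sqrt (∑' n, v n ^ 2) := by
    rw [← lp_norm_sq_real y]; exact (Real.sqrt_sq (norm_nonneg y)).symm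
  calc ∑' n, u n * v n = ⟪x, y⟫_ℝ := h1.symm
    _ ≤ ‖x‖ * ‖y‖ := real_inner_le_norm x y
    _ = _ := by rw [h2, h3]

lemma tsum_sq_triangle {a b c : ℕ → ℝ} (ha0 : ∀ n, 0 ≤ a n) (hb0 : ∀ n, 0 ≤ b n)
    (hc0 : ∀ n, 0 ≤ c n) (habc : ∀ n, a n ≤ b n + c n)
    (hb : Summable fun n => b n ^ 2) (hc : Summable fun n => c n ^ 2) :
    (Summable fun n => a n ^ 2) ∧
    ∑' n, a n ^ 2 ≤ (Real.sqrt (∑' n, b n ^ 2) + Real.sqrt (∑' n, c n ^ 2)) ^ 2 := by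
  have hbc := summable_mul_of_sq hb0 hc0 hb hc
  have hsum : Summable fun n => (b n + c n) ^ 2 := by
    have hh : (fun n => (b n + c n) ^ 2) = fun n => b n ^ 2 + 2 * (b n * c n) + c n ^ 2 := by
      ext n; ring
    rw [hh]; exact (hb.add (hbc.mul_left 2)).add hc
  have hle : ∀ n, a n ^ 2 ≤ (b n + c n) ^ 2 := fun n => by
    nlinarith [ha0 n, hb0 n, hc0 n, habc n]
  have hA : Summable fun n => a n ^ 2 :=
    Summable.of_nonneg_of_le (fun n => sq_nonneg _) hle hsum
  refine ⟨hA, ?_⟩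
  have h1 : ∑' n, a n ^ 2 ≤ ∑' n, (b n + c n) ^ 2 := Summable.tsum_le_tsum hle hA hsum
  have h2 : ∑' n, (b n + c n) ^ 2
      = ∑' n, b n ^ 2 + 2 * ∑' n, (b n * c n) + ∑' n, c n ^ 2 := by
    have hh : (fun n => (b n + c n) ^ 2) = fun n => (b n ^ 2 + 2 * (b n * c n)) + c n ^ 2 := by
      ext n; ring
    rw [hh, Summable.tsum_add (hb.add (hbc.mul_left 2)) hc, Summable.tsum_add hb (hbc.mul_left 2),
      tsum_mul_left]
  have h3 := tsum_cauchy_schwarz hb0 hc0 hb hc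
  have hB0 : (0:ℝ) ≤ ∑' n, b n ^ 2 := tsum_nonneg fun n => sq_nonneg _
  have hC0 : (0:ℝ) ≤ ∑' n, c n ^ 2 := tsum_nonneg fun n => sq_nonneg _
  have hsB := Real.sq_sqrt hB0
  have hsC := Real.sq_sqrt hC0
  nlinarith [Real.sqrt_nonneg (∑' n, b n ^ 2), Real.sqrt_nonneg (∑' n, c n ^ 2)]

set_option maxHeartbeats 2000000 in
theorem stmt2
    (φ ψ : ℕ → H) (mΦ MΦ q q0 : ℝ)
    (UΦ : H →L[ℂ] ℓ²) (TΦ : ℓ² →L[ℂ] H) (SΦ SΦinv : H →L[ℂ] H)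
    (hUΦ : IsAnalysis φ UΦ) (hTΦ : TΦ = adjoint UΦ) (hSΦ : SΦ = TΦ ∘L UΦ)
    (hinv1 : SΦ ∘L SΦinv = ContinuousLinearMap.id ℂ H)
    (hinv2 : SΦinv ∘L SΦ = ContinuousLinearMap.id ℂ H)
    (hΦ : IsFrame φ mΦ MΦ)
    (hqs : Summable fun n => ‖φ n - ψ n‖ ^ 2)
    (hq : q = ∑' n, ‖φ n - ψ n‖ ^ 2)
    (hq0s : Summable fun n => ‖φ n - ψ n‖ * ‖SΦinv (φ n)‖)
    (hq0 : q0 = ∑' n, ‖φ n - ψ n‖ * ‖SΦinv (φ n)‖)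
    (hq0lt : q0 < 1) :
    IsFrame ψ (mΦ * (1 - q0) ^ 2) (MΦ * (1 + Real.sqrt (q / MΦ)) ^ 2) := by
  obtain ⟨hm, hM, hfr⟩ := hΦ
  have hq0nonneg : 0 ≤ q0 := by
    rw [hq0]; exact tsum_nonneg fun n => mul_nonneg (norm_nonneg _) (norm_nonneg _)
  have hqnonneg : 0 ≤ q := by
    rw [hq]; exact tsum_nonneg fun n => sq_nonneg _
  -- summability of φ-frame coefficients
  have hsummΦ : ∀ f : H, Summable fun n => ‖(inner ℂ (φ n) f : ℂ)‖ ^ 2 := by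
    intro f
    refine (lp_summable_sq_c (UΦ f)).congr fun n => ?_
    rw [hUΦ f n]
  -- norm of analysis operator values
  have normUΦ : ∀ f : H, ‖UΦ f‖ ^ 2 = ∑' n, ‖(inner ℂ (φ n) f : ℂ)‖ ^ 2 := by
    intro f
    rw [lp_norm_sq_c (UΦ f)]
    exact tsum_congr fun n => by rw [hUΦ f n]
  -- inner ℂ products through the analysis operator
  have innerUU : ∀ f g : H,
      (⟪UΦ f, UΦ g⟫_ℂ) = ∑' n, conj (inner ℂ (φ n) f : ℂ) * (inner ℂ (φ n) g : ℂ) := by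
    intro f g
    rw [lp.inner_eq_tsum]
    exact tsum_congr fun n => by rw [RCLike.inner_apply, hUΦ f n, hUΦ g n, mul_comm]
  have innerS : ∀ f g : H, (inner ℂ f (SΦ g) : ℂ) = ⟪UΦ f, UΦ g⟫_ℂ := by
    intro f g
    rw [hSΦ, ContinuousLinearMap.comp_apply, hTΦ]
    exact adjoint_inner_right UΦ f (UΦ g)
  have hSadj : adjoint SΦ = SΦ := by
    rw [hSΦ, hTΦ, adjoint_comp, adjoint_adjoint]
  have hSinvadj : adjoint SΦinv = SΦinv := by
    have h3 : (adjoint SΦinv) ∘L (adjoint SΦ) = adjoint (SΦ ∘L SΦinv) := (adjoint_comp _ _).symm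
    have h4 : adjoint (SΦ ∘L SΦinv) = ContinuousLinearMap.id ℂ H := by
      rw [hinv1]; exact adjoint_id
    calc adjoint SΦinv = (adjoint SΦinv) ∘L (SΦ ∘L SΦinv) := by
          rw [hinv1, ContinuousLinearMap.comp_id]
      _ = ((adjoint SΦinv) ∘L SΦ) ∘L SΦinv := by rw [← ContinuousLinearMap.comp_assoc]
      _ = ((adjoint SΦinv) ∘L adjoint SΦ) ∘L SΦinv := by rw [hSadj]
      _ = (adjoint (SΦ ∘L SΦinv)) ∘L SΦinv := by rw [h3]
      _ = SΦinv := by rw [h4, ContinuousLinearMap.id_comp]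
  have hSSinv : ∀ y : H, SΦ (SΦinv y) = y := by
    intro y
    have := congrArg (fun T : H →L[ℂ] H => T y) hinv1
    simpa using this
  -- lower bound for SΦ
  have hSlow : ∀ x : H, mΦ * ‖x‖ ≤ ‖SΦ x‖ := by
    intro x
    have h1 : mΦ * ‖x‖ ^ 2 ≤ ∑' n, ‖(inner ℂ (φ n) x : ℂ)‖ ^ 2 := (hfr x).1
    have h2 : (inner ℂ x (SΦ x) : ℂ) = (‖UΦ x‖ : ℂ) ^ 2 := by
      rw [innerS, inner_self_eq_norm_sq_to_K]; norm_cast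
    have h3 : ‖UΦ x‖ ^ 2 = ‖(inner ℂ x (SΦ x) : ℂ)‖ := by
      rw [h2]; simp [norm_pow]
    have h4 : ‖(inner ℂ x (SΦ x) : ℂ)‖ ≤ ‖x‖ * ‖SΦ x‖ := norm_inner_le_norm x (SΦ x)
    rw [normUΦ x] at h3
    rcases eq_or_ne x 0 with rfl | hx
    · simp
    · have hxpos : 0 < ‖x‖ := norm_pos_iff.mpr hx
      have : mΦ * ‖x‖ ^ 2 ≤ ‖x‖ * ‖SΦ x‖ := by
        calc mΦ * ‖x‖ ^ 2 ≤ ∑' n, ‖(inner ℂ (φ n) x : ℂ)‖ ^ 2 := h1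
          _ = ‖(inner ℂ x (SΦ x) : ℂ)‖ := h3
          _ ≤ ‖x‖ * ‖SΦ x‖ := h4
      nlinarith
  have hSinvnorm : ∀ y : H, mΦ * ‖SΦinv y‖ ≤ ‖y‖ := by
    intro y
    have := hSlow (SΦinv y)
    rwa [hSSinv y] at this
  ---- Upper bound (Bessel) part
  have hupper : ∀ f : H, (Summable fun n => ‖(inner ℂ (ψ n) f : ℂ)‖ ^ 2) ∧
      ∑' n, ‖(inner ℂ (ψ n) f : ℂ)‖ ^ 2 ≤ MΦ * (1 + Real.sqrt (q / MΦ)) ^ 2 * ‖f‖ ^ 2 := by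
    intro f
    set b : ℕ → ℝ := fun n => ‖(inner ℂ (φ n) f : ℂ)‖ with hb
    set c : ℕ → ℝ := fun n => ‖(inner ℂ (φ n - ψ n) f : ℂ)‖ with hc
    have hcle : ∀ n, c n ^ 2 ≤ ‖φ n - ψ n‖ ^ 2 * ‖f‖ ^ 2 := fun n => by
      have := norm_inner_le_norm (𝕜 := ℂ) (φ n - ψ n) f
      have h0 : (0:ℝ) ≤ c n := norm_nonneg _
      nlinarith
    have hcs : Summable fun n => c n ^ 2 :=
      Summable.of_nonneg_of_le (fun n => sq_nonneg _) hcle (hqs.mul_right _)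
    have hcb : ∑' n, c n ^ 2 ≤ q * ‖f‖ ^ 2 := by
      calc ∑' n, c n ^ 2 ≤ ∑' n, ‖φ n - ψ n‖ ^ 2 * ‖f‖ ^ 2 :=
            Summable.tsum_le_tsum hcle hcs (hqs.mul_right _)
        _ = q * ‖f‖ ^ 2 := by rw [hq, tsum_mul_right]
    have habc : ∀ n, ‖(inner ℂ (ψ n) f : ℂ)‖ ≤ b n + c n := by
      intro n
      have : (inner ℂ (ψ n) f : ℂ) = (inner ℂ (φ n) f : ℂ) - (inner ℂ (φ n - ψ n) f : ℂ) := by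
        rw [inner_sub_left]; ring
      rw [this]
      exact norm_sub_le _ _
    obtain ⟨hS, hle⟩ := tsum_sq_triangle (fun n => norm_nonneg _) (fun n => norm_nonneg _)
      (fun n => norm_nonneg _) habc (hsummΦ f) hcs
    refine ⟨hS, ?_⟩
    have hbb : ∑' n, b n ^ 2 ≤ MΦ * ‖f‖ ^ 2 := (hfr f).2
    have hb0 : (0:ℝ) ≤ ∑' n, b n ^ 2 := tsum_nonneg fun n => sq_nonneg _
    have hc0 : (0:ℝ) ≤ ∑' n, c n ^ 2 := tsum_nonneg fun n => sq_nonneg _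
    have hsb : Real.sqrt (∑' n, b n ^ 2) ≤ Real.sqrt MΦ * ‖f‖ := by
      rw [← Real.sqrt_sq (norm_nonneg f), ← Real.sqrt_mul hM.le]
      exact Real.sqrt_le_sqrt hbb
    have hsc : Real.sqrt (∑' n, c n ^ 2) ≤ Real.sqrt q * ‖f‖ := by
      rw [← Real.sqrt_sq (norm_nonneg f), ← Real.sqrt_mul hqnonneg]
      exact Real.sqrt_le_sqrt hcb
    have hkey : (Real.sqrt (∑' n, b n ^ 2) + Real.sqrt (∑' n, c n ^ 2)) ^ 2
        ≤ ((Real.sqrt MΦ + Real.sqrt q) * ‖f‖) ^ 2 := by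
      have h1 : Real.sqrt (∑' n, b n ^ 2) + Real.sqrt (∑' n, c n ^ 2)
          ≤ (Real.sqrt MΦ + Real.sqrt q) * ‖f‖ := by
        rw [add_mul]; exact add_le_add hsb hsc
      have h2 : (0:ℝ) ≤ Real.sqrt (∑' n, b n ^ 2) + Real.sqrt (∑' n, c n ^ 2) :=
        add_nonneg (Real.sqrt_nonneg _) (Real.sqrt_nonneg _)
      nlinarith
    have hconst : ((Real.sqrt MΦ + Real.sqrt q)) ^ 2
        = MΦ * (1 + Real.sqrt (q / MΦ)) ^ 2 := by
      have hdiv : Real.sqrt (q / MΦ) = Real.sqrt q / Real.sqrt MΦ := Real.sqrt_div' q hM.le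
      have hMs : Real.sqrt MΦ ^ 2 = MΦ := Real.sq_sqrt hM.le
      have hMne : Real.sqrt MΦ ≠ 0 := by positivity
      have e : 1 + Real.sqrt q / Real.sqrt MΦ = (Real.sqrt MΦ + Real.sqrt q) / Real.sqrt MΦ := by
        field_simp
      rw [hdiv, e, div_pow, hMs]
      field_simp
    calc ∑' n, ‖(inner ℂ (ψ n) f : ℂ)‖ ^ 2
        ≤ (Real.sqrt (∑' n, b n ^ 2) + Real.sqrt (∑' n, c n ^ 2)) ^ 2 := hle
      _ ≤ ((Real.sqrt MΦ + Real.sqrt q) * ‖f‖) ^ 2 := hkey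
      _ = MΦ * (1 + Real.sqrt (q / MΦ)) ^ 2 * ‖f‖ ^ 2 := by rw [mul_pow, hconst]
  ---- The perturbation operator D
  have hDs : ∀ f : H, Summable fun n => (inner ℂ (SΦinv (φ n)) f : ℂ) • (φ n - ψ n) := by
    intro f
    apply Summable.of_norm
    refine Summable.of_nonneg_of_le (fun n => norm_nonneg _) (fun n => ?_) (hq0s.mul_right ‖f‖)
    rw [norm_smul]
    calc ‖(inner ℂ (SΦinv (φ n)) f : ℂ)‖ * ‖φ n - ψ n‖
        ≤ ‖SΦinv (φ n)‖ * ‖f‖ * ‖φ n - ψ n‖ :=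
          mul_le_mul_of_nonneg_right (norm_inner_le_norm _ _) (norm_nonneg _)
      _ = ‖φ n - ψ n‖ * ‖SΦinv (φ n)‖ * ‖f‖ := by ring
  have hDnormsum : ∀ f : H, Summable fun n => ‖(inner ℂ (SΦinv (φ n)) f : ℂ) • (φ n - ψ n)‖ := by
    intro f
    refine Summable.of_nonneg_of_le (fun n => norm_nonneg _) (fun n => ?_) (hq0s.mul_right ‖f‖)
    rw [norm_smul]
    calc ‖(inner ℂ (SΦinv (φ n)) f : ℂ)‖ * ‖φ n - ψ n‖
        ≤ ‖SΦinv (φ n)‖ * ‖f‖ * ‖φ n - ψ n‖ :=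
          mul_le_mul_of_nonneg_right (norm_inner_le_norm _ _) (norm_nonneg _)
      _ = ‖φ n - ψ n‖ * ‖SΦinv (φ n)‖ * ‖f‖ := by ring
  have hDbnd : ∀ f : H,
      ‖∑' n, (inner ℂ (SΦinv (φ n)) f : ℂ) • (φ n - ψ n)‖ ≤ q0 * ‖f‖ := by
    intro f
    calc ‖∑' n, (inner ℂ (SΦinv (φ n)) f : ℂ) • (φ n - ψ n)‖
        ≤ ∑' n, ‖(inner ℂ (SΦinv (φ n)) f : ℂ) • (φ n - ψ n)‖ :=
          norm_tsum_le_tsum_norm (hDnormsum f)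
      _ ≤ ∑' n, ‖φ n - ψ n‖ * ‖SΦinv (φ n)‖ * ‖f‖ := by
          refine Summable.tsum_le_tsum (fun n => ?_) (hDnormsum f) (hq0s.mul_right ‖f‖)
          rw [norm_smul]
          calc ‖(inner ℂ (SΦinv (φ n)) f : ℂ)‖ * ‖φ n - ψ n‖
              ≤ ‖SΦinv (φ n)‖ * ‖f‖ * ‖φ n - ψ n‖ :=
                mul_le_mul_of_nonneg_right (norm_inner_le_norm _ _) (norm_nonneg _)
            _ = ‖φ n - ψ n‖ * ‖SΦinv (φ n)‖ * ‖f‖ := by ring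
      _ = q0 * ‖f‖ := by rw [tsum_mul_right, ← hq0]
  set Dlin : H →ₗ[ℂ] H :=
    { toFun := fun f => ∑' n, (inner ℂ (SΦinv (φ n)) f : ℂ) • (φ n - ψ n)
      map_add' := fun f g => by
        simp only [inner_add_right, add_smul]
        exact Summable.tsum_add (hDs f) (hDs g)
      map_smul' := fun a f => by
        simp only [inner_smul_right, RingHom.id_apply, ← smul_smul]
        exact Summable.tsum_const_smul a (hDs f) } with hDlin
  set D : H →L[ℂ] H := Dlin.mkContinuous q0 (fun f => hDbnd f) with hD
  have hDapp : ∀ f : H, D f = ∑' n, (inner ℂ (SΦinv (φ n)) f : ℂ) • (φ n - ψ n) := fun f => rfl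
  have hDn : ‖D‖ < 1 :=
    lt_of_le_of_lt (Dlin.mkContinuous_norm_le hq0nonneg _) hq0lt
  ---- Lower bound for each f
  have hlower : ∀ f : H,
      mΦ * (1 - q0) ^ 2 * ‖f‖ ^ 2 ≤ ∑' n, ‖(inner ℂ (ψ n) f : ℂ)‖ ^ 2 := by
    intro f
    set u := Units.oneSub D hDn with hu
    set h : H := (↑u⁻¹ : H →L[ℂ] H) f with hh
    have hTh : h - D h = f := by
      have h1 : (↑u * ↑u⁻¹ : H →L[ℂ] H) = 1 := u.mul_inv
      have h2 := congrArg (fun T : H →L[ℂ] H => T f) h1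
      have hu1 : (↑u : H →L[ℂ] H) = 1 - D := rfl
      simp only [hu1, ContinuousLinearMap.mul_apply] at h2
      simpa [hh, sub_apply] using h2
    have hhb : (1 - q0) * ‖h‖ ≤ ‖f‖ := by
      have h1 : ‖h‖ - ‖D h‖ ≤ ‖h - D h‖ := norm_sub_norm_le h (D h)
      have h2 : ‖D h‖ ≤ q0 * ‖h‖ := by rw [hDapp]; exact hDbnd h
      rw [hTh] at h1
      linarith
    set g : H := SΦinv h with hg
    set cc : ℕ → ℂ := fun n => (inner ℂ (φ n) g : ℂ) with hcc
    -- identity 1 : ⟪h, f⟫ = ∑ conj (cc n) * ⟪φ n, f⟫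
    have hid1 : (inner ℂ h f : ℂ) = ∑' n, conj (cc n) * (inner ℂ (φ n) f : ℂ) := by
      have h1 : h = SΦ g := (hSSinv h).symm
      calc (inner ℂ h f : ℂ) = (inner ℂ (SΦ g) f : ℂ) := by rw [← h1]
        _ = (inner ℂ ((adjoint SΦ) g) f : ℂ) := by rw [hSadj]
        _ = (inner ℂ g (SΦ f) : ℂ) := adjoint_inner_left SΦ f g
        _ = ⟪UΦ g, UΦ f⟫_ℂ := innerS g f
        _ = ∑' n, conj (cc n) * (inner ℂ (φ n) f : ℂ) := innerUU g f
    -- coefficients of D h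
    have hcoef : ∀ n, (inner ℂ (SΦinv (φ n)) h : ℂ) = cc n := by
      intro n
      calc (inner ℂ (SΦinv (φ n)) h : ℂ) = (inner ℂ ((adjoint SΦinv) (φ n)) h : ℂ) := by
            rw [hSinvadj]
        _ = (inner ℂ (φ n) (SΦinv h) : ℂ) := adjoint_inner_left SΦinv h (φ n)
        _ = cc n := rfl
    -- identity 2 : ⟪D h, f⟫ = ∑ conj (cc n) * ⟪φ n - ψ n, f⟫
    have hid2 : (inner ℂ (D h) f : ℂ) = ∑' n, conj (cc n) * (inner ℂ (φ n - ψ n) f : ℂ) := by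
      have h1 : (inner ℂ f (D h) : ℂ)
          = ∑' n, (inner ℂ (SΦinv (φ n)) h : ℂ) * (inner ℂ f (φ n - ψ n) : ℂ) := by
        rw [hDapp]
        simpa [inner_smul_right, inner_sub_right] using ((innerSL ℂ f).map_tsum (hDs h))
      calc (inner ℂ (D h) f : ℂ) = conj (inner ℂ f (D h) : ℂ) := (inner_conj_symm _ _).symm
        _ = conj (∑' n, (inner ℂ (SΦinv (φ n)) h : ℂ) * (inner ℂ f (φ n - ψ n) : ℂ)) := by
            rw [h1]
        _ = ∑' n, conj ((inner ℂ (SΦinv (φ n)) h : ℂ) * (inner ℂ f (φ n - ψ n) : ℂ)) := tsum_star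
        _ = ∑' n, conj (cc n) * (inner ℂ (φ n - ψ n) f : ℂ) := by
            refine tsum_congr fun n => ?_
            rw [hcoef n, map_mul, inner_conj_symm, inner_conj_symm]
    -- summability of the two series
    have hs1 : Summable fun n => conj (cc n) * (inner ℂ (φ n) f : ℂ) := by
      refine (lp.summable_inner (UΦ g) (UΦ f)).congr fun n => ?_
      rw [RCLike.inner_apply, hUΦ g n, hUΦ f n, mul_comm]
    have hs2 : Summable fun n => conj (cc n) * (inner ℂ (φ n - ψ n) f : ℂ) := by
      apply Summable.of_norm
      refine Summable.of_nonneg_of_le (fun n => norm_nonneg _) (fun n => ?_)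
        ((hq0s.mul_right (‖h‖ * ‖f‖)))
      rw [norm_mul, RCLike.norm_conj]
      have e1 : ‖cc n‖ ≤ ‖SΦinv (φ n)‖ * ‖h‖ := by
        rw [← hcoef n]; exact norm_inner_le_norm _ _
      have e2 : ‖(inner ℂ (φ n - ψ n) f : ℂ)‖ ≤ ‖φ n - ψ n‖ * ‖f‖ := norm_inner_le_norm _ _
      calc ‖cc n‖ * ‖(inner ℂ (φ n - ψ n) f : ℂ)‖
          ≤ (‖SΦinv (φ n)‖ * ‖h‖) * (‖φ n - ψ n‖ * ‖f‖) := by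
            exact mul_le_mul e1 e2 (norm_nonneg _) (by positivity)
        _ = ‖φ n - ψ n‖ * ‖SΦinv (φ n)‖ * (‖h‖ * ‖f‖) := by ring
    -- key identity
    have hkey : (inner ℂ f f : ℂ) = ∑' n, conj (cc n) * (inner ℂ (ψ n) f : ℂ) := by
      calc (inner ℂ f f : ℂ) = (inner ℂ (h - D h) f : ℂ) := by rw [hTh]
        _ = (inner ℂ h f : ℂ) - (inner ℂ (D h) f : ℂ) := inner_sub_left h (D h) f
        _ = ∑' n, (conj (cc n) * (inner ℂ (φ n) f : ℂ)
              - conj (cc n) * (inner ℂ (φ n - ψ n) f : ℂ)) := by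
            rw [hid1, hid2, Summable.tsum_sub hs1 hs2]
        _ = ∑' n, conj (cc n) * (inner ℂ (ψ n) f : ℂ) := by
            refine tsum_congr fun n => ?_
            rw [inner_sub_left]
            ring
    -- estimates
    have hsψ : Summable fun n => ‖(inner ℂ (ψ n) f : ℂ)‖ ^ 2 := (hupper f).1
    have hsc2 : Summable fun n => ‖cc n‖ ^ 2 := hsummΦ g
    have hsprod : Summable fun n => ‖cc n‖ * ‖(inner ℂ (ψ n) f : ℂ)‖ :=
      summable_mul_of_sq (fun n => norm_nonneg _) (fun n => norm_nonneg _) hsc2 hsψ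
    have hest1 : ‖f‖ ^ 2 ≤ ∑' n, ‖cc n‖ * ‖(inner ℂ (ψ n) f : ℂ)‖ := by
      have h0 : ‖(inner ℂ f f : ℂ)‖ = ‖f‖ ^ 2 := by
        rw [inner_self_eq_norm_sq_to_K]; simp [norm_pow]
      rw [← h0, hkey]
      calc ‖∑' n, conj (cc n) * (inner ℂ (ψ n) f : ℂ)‖
          ≤ ∑' n, ‖conj (cc n) * (inner ℂ (ψ n) f : ℂ)‖ := by
            refine norm_tsum_le_tsum_norm ?_
            refine hsprod.congr fun n => ?_
            rw [norm_mul, RCLike.norm_conj]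
        _ = ∑' n, ‖cc n‖ * ‖(inner ℂ (ψ n) f : ℂ)‖ := by
            refine tsum_congr fun n => ?_
            rw [norm_mul, RCLike.norm_conj]
    have hest2 : ∑' n, ‖cc n‖ * ‖(inner ℂ (ψ n) f : ℂ)‖
        ≤ Real.sqrt (∑' n, ‖cc n‖ ^ 2) * Real.sqrt (∑' n, ‖(inner ℂ (ψ n) f : ℂ)‖ ^ 2) :=
      tsum_cauchy_schwarz (fun n => norm_nonneg _) (fun n => norm_nonneg _) hsc2 hsψ
    -- bound on ∑ ‖cc n‖ ^ 2
    have hC : mΦ * ∑' n, ‖cc n‖ ^ 2 ≤ ‖h‖ ^ 2 := by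
      have h1 : (inner ℂ g (SΦ g) : ℂ) = (‖UΦ g‖ : ℂ) ^ 2 := by
        rw [innerS, inner_self_eq_norm_sq_to_K]; norm_cast
      have h2 : SΦ g = h := hSSinv h
      have h3 : ∑' n, ‖cc n‖ ^ 2 = ‖(inner ℂ g h : ℂ)‖ := by
        rw [← h2, h1, ← normUΦ g]; simp [norm_pow]
      have h4 : ‖(inner ℂ g h : ℂ)‖ ≤ ‖g‖ * ‖h‖ := norm_inner_le_norm g h
      have h5 : mΦ * ‖g‖ ≤ ‖h‖ := hSinvnorm h
      have h6 : (0:ℝ) ≤ ‖h‖ := norm_nonneg _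
      have h7 : (0:ℝ) ≤ ‖g‖ := norm_nonneg _
      calc mΦ * ∑' n, ‖cc n‖ ^ 2 ≤ mΦ * (‖g‖ * ‖h‖) := by
            rw [h3]; exact mul_le_mul_of_nonneg_left h4 hm.le
        _ = (mΦ * ‖g‖) * ‖h‖ := by ring
        _ ≤ ‖h‖ * ‖h‖ := mul_le_mul_of_nonneg_right h5 h6
        _ = ‖h‖ ^ 2 := by ring
    -- final arithmetic
    set B := ∑' n, ‖(inner ℂ (ψ n) f : ℂ)‖ ^ 2 with hB
    set C := ∑' n, ‖cc n‖ ^ 2 with hCdef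
    have hB0 : 0 ≤ B := tsum_nonneg fun n => sq_nonneg _
    have hC0 : 0 ≤ C := tsum_nonneg fun n => sq_nonneg _
    have hf4 : ‖f‖ ^ 4 ≤ C * B := by
      have := mul_self_le_mul_self (by positivity) (hest1.trans hest2)
      calc ‖f‖ ^ 4 = ‖f‖ ^ 2 * ‖f‖ ^ 2 := by ring
        _ ≤ (Real.sqrt C * Real.sqrt B) * (Real.sqrt C * Real.sqrt B) := this
        _ = (Real.sqrt C ^ 2) * (Real.sqrt B ^ 2) := by ring
        _ = C * B := by rw [Real.sq_sqrt hC0, Real.sq_sqrt hB0]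
    rcases eq_or_ne f 0 with rfl | hf
    · simpa using hB0
    · have hfpos : 0 < ‖f‖ := norm_pos_iff.mpr hf
      have h1q0 : 0 < 1 - q0 := by linarith
      have hmain : mΦ * (1 - q0) ^ 2 * ‖f‖ ^ 4 ≤ ‖f‖ ^ 2 * B := by
        have e1 : mΦ * (1 - q0) ^ 2 * ‖f‖ ^ 4 ≤ (1 - q0) ^ 2 * (mΦ * C) * B := by
          have := mul_le_mul_of_nonneg_right hf4 (mul_nonneg hm.le (sq_nonneg (1 - q0)))
          nlinarith [hf4, hB0, hm.le, sq_nonneg (1 - q0)]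
        have e2 : (1 - q0) ^ 2 * (mΦ * C) * B ≤ (1 - q0) ^ 2 * ‖h‖ ^ 2 * B := by
          have := mul_le_mul_of_nonneg_left hC (sq_nonneg (1 - q0))
          exact mul_le_mul_of_nonneg_right this hB0
        have e3 : (1 - q0) ^ 2 * ‖h‖ ^ 2 * B ≤ ‖f‖ ^ 2 * B := by
          have hh0 : (0:ℝ) ≤ ‖h‖ := norm_nonneg _
          have h4 : (0:ℝ) ≤ (1 - q0) * ‖h‖ := mul_nonneg h1q0.le hh0
          have : (1 - q0) ^ 2 * ‖h‖ ^ 2 ≤ ‖f‖ ^ 2 := by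
            nlinarith [hhb, h4, norm_nonneg f]
          exact mul_le_mul_of_nonneg_right this hB0
        linarith
      have hfsq : 0 < ‖f‖ ^ 2 := by positivity
      have : mΦ * (1 - q0) ^ 2 * ‖f‖ ^ 2 * ‖f‖ ^ 2 ≤ B * ‖f‖ ^ 2 := by
        calc mΦ * (1 - q0) ^ 2 * ‖f‖ ^ 2 * ‖f‖ ^ 2 = mΦ * (1 - q0) ^ 2 * ‖f‖ ^ 4 := by ring
          _ ≤ ‖f‖ ^ 2 * B := hmain
          _ = B * ‖f‖ ^ 2 := by ring
      exact le_of_mul_le_mul_right this hfsq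
  -- assemble
  refine ⟨?_, ?_, fun f => ⟨hlower f, (hupper f).2⟩⟩
  · have h1q0 : 0 < 1 - q0 := by linarith
    positivity
  · have : 0 < 1 + Real.sqrt (q / MΦ) := by positivity
    positivity

end
end

section
/- If Φ = (B eₙ)ₙ is a Riesz basis of H for a bounded bijective operator B ∈ B(H) and orthonormal basis (eₙ), then every approximately dual frame of Φ is of the form (A* (B*)⁻¹ eₙ)ₙ for some A ∈ B(H) with ‖Id − A‖ < 1; in particular every approximately dual frame of a Riesz basis is again a Riesz basis. -/
open ContinuousLinearMap MeasureTheory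
open scoped InnerProductSpace ComplexConjugate

noncomputable section

variable {H : Type} [NormedAddCommGroup H] [InnerProductSpace ℂ H] [CompleteSpace H]

theorem stmt8
    (e : HilbertBasis ℕ ℂ H) (B Binv : H →L[ℂ] H)
    (hB1 : B ∘L Binv = ContinuousLinearMap.id ℂ H)
    (hB2 : Binv ∘L B = ContinuousLinearMap.id ℂ H)
    (φ ψ : ℕ → H) (hφ : ∀ n, φ n = B (e n)) (mΦ MΦ MΨ : ℝ)
    (hΦ : IsFrame φ mΦ MΦ) (hΨ : IsBessel ψ MΨ)
    (UΦ Uψ : H →L[ℂ] ℓ²) (TΦ : ℓ² →L[ℂ] H)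
    (hUΦ : IsAnalysis φ UΦ) (hUψ : IsAnalysis ψ Uψ) (hTΦ : TΦ = adjoint UΦ)
    (hdual : ‖ContinuousLinearMap.id ℂ H - TΦ ∘L Uψ‖ < 1) :
    ∃ A : H →L[ℂ] H, ‖ContinuousLinearMap.id ℂ H - A‖ < 1 ∧
      (∀ n, ψ n = adjoint A (adjoint Binv (e n))) ∧
      Function.Bijective (adjoint A ∘L adjoint Binv) := by
  set A : H →L[ℂ] H := TΦ ∘L Uψ with hA
  refine ⟨A, hdual, ?_, ?_⟩
  · -- ψ n = adjoint A (adjoint Binv (e n))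
    intro n
    have hadj : adjoint A = adjoint Uψ ∘L UΦ := by
      rw [hA, adjoint_comp, hTΦ, adjoint_adjoint]
    have hUφe : UΦ (adjoint Binv (e n)) = lp.single 2 n (1 : ℂ) := by
      apply lp.ext
      funext k
      have h1 : (UΦ (adjoint Binv (e n))) k = inner ℂ (φ k) (adjoint Binv (e n)) :=
        hUΦ _ k
      rw [h1, hφ k]
      have h2 : (inner ℂ (B (e k)) (adjoint Binv (e n)) : ℂ)
          = inner ℂ ((Binv ∘L B) (e k)) (e n) := by
        rw [adjoint_inner_right, ContinuousLinearMap.comp_apply]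
      rw [h2, hB2, ContinuousLinearMap.id_apply]
      have := (orthonormal_iff_ite.mp e.orthonormal) k n
      rw [this, lp.single_apply]
      by_cases h : k = n <;> simp [h]
    rw [hadj, ContinuousLinearMap.comp_apply, hUφe]
    refine (ext_inner_right ℂ fun f => ?_).symm
    rw [adjoint_inner_left, lp.inner_single_left]
    simp [hUψ f n, RCLike.inner_apply]
  · -- bijectivity
    have h1 : (1 : H →L[ℂ] H) = ContinuousLinearMap.id ℂ H := rfl
    have hA1 : ‖(1 : H →L[ℂ] H) - A‖ < 1 := by rw [h1]; exact hdual
    let u : (H →L[ℂ] H)ˣ := Units.oneSub ((1 : H →L[ℂ] H) - A) hA1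
    have hu : (u : H →L[ℂ] H) = A := by simp [u, Units.val_oneSub]
    let uB : (H →L[ℂ] H)ˣ :=
      ⟨Binv, B, by rw [h1, ← hB2]; rfl, by rw [h1, ← hB1]; rfl⟩
    let w : (H →L[ℂ] H)ˣ := uB * u
    have hw : (w : H →L[ℂ] H) = Binv ∘L A := by
      simp only [w, Units.val_mul, hu]; rfl
    have hcomp : adjoint A ∘L adjoint Binv = adjoint (Binv ∘L A) :=
      (adjoint_comp Binv A).symm
    rw [hcomp, ← hw]
    have h2 : adjoint (w : H →L[ℂ] H) ∘L adjoint (↑w⁻¹ : H →L[ℂ] H)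
        = ContinuousLinearMap.id ℂ H := by
      rw [← adjoint_comp]
      have : (↑w⁻¹ : H →L[ℂ] H) ∘L (w : H →L[ℂ] H) = 1 := w.inv_mul
      rw [this, h1, adjoint_id]
    have h3 : adjoint (↑w⁻¹ : H →L[ℂ] H) ∘L adjoint (w : H →L[ℂ] H)
        = ContinuousLinearMap.id ℂ H := by
      rw [← adjoint_comp]
      have : (w : H →L[ℂ] H) ∘L (↑w⁻¹ : H →L[ℂ] H) = 1 := w.mul_inv
      rw [this, h1, adjoint_id]
    constructor
    · intro x y hxy
      have := congrArg (adjoint (↑w⁻¹ : H →L[ℂ] H)) hxy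
      simpa [← ContinuousLinearMap.comp_apply, h3] using this
    · intro y
      refine ⟨adjoint (↑w⁻¹ : H →L[ℂ] H) y, ?_⟩
      have := ContinuousLinearMap.ext_iff.mp h2 y
      simpa [ContinuousLinearMap.comp_apply] using this

end
end
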